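/- Let n ≥ 1. There exists a constant C ≥ 1 (depending only on n) such that for every integer k ≥ 1 and all p, x ∈ ℝⁿ: (1/2)·inf_{m ∈ ℤⁿ} |x − m − p|² − (log C)/k ≤ −(1/k) log Σ_{m ∈ ℤⁿ} e^{−k|x − m − p|²/2} ≤ (1/2)·inf_{m ∈ ℤⁿ} |x − m − p|². In particular −(1/k) log Σ_{m ∈ ℤⁿ + p} e^{−k|x − m|²/2} converges to d(πx, πp)²/2 uniformly in x and p as k → ∞, where d is the quotient metric on ℝⁿ/ℤⁿ. -/

import Mathlib

open Real Filter

noncomputable section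

/-- Squared Euclidean norm on `ℝⁿ`. -/
def sqnorm {n : ℕ} (v : Fin n → ℝ) : ℝ := ∑ i, (v i)^2

/-- A lattice point of `ℤⁿ` viewed in `ℝⁿ`. -/
def zvec {n : ℕ} (m : Fin n → ℤ) : Fin n → ℝ := fun i => (m i : ℝ)

lemma sqnorm_nonneg' {n : ℕ} (v : Fin n → ℝ) : 0 ≤ sqnorm v :=
  Finset.sum_nonneg fun _ _ => sq_nonneg _


lemma summable_int_gauss (c : ℝ) (hc : 0 < c) : Summable (fun m : ℤ => Real.exp (-c * (m:ℝ)^2)) := by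
  have hgeo : Summable (fun n : ℕ => Real.exp (-c) ^ n) :=
    summable_geometric_of_lt_one (Real.exp_nonneg _) (Real.exp_lt_one_iff.mpr (by linarith))
  apply Summable.of_nat_of_neg_add_one
  · apply Summable.of_nonneg_of_le (fun n => (Real.exp_pos _).le) _ hgeo
    intro n
    rw [← Real.exp_nat_mul]
    apply Real.exp_le_exp.mpr
    push_cast
    have h : (n:ℝ) ≤ (n:ℝ)^2 := by exact_mod_cast Nat.le_self_pow two_ne_zero n
    nlinarith [mul_le_mul_of_nonneg_left h hc.le]
  · apply Summable.of_nonneg_of_le (fun n => (Real.exp_pos _).le) _ hgeo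
    intro n
    rw [← Real.exp_nat_mul]
    apply Real.exp_le_exp.mpr
    push_cast
    have h : (n:ℝ) ≤ (-((n:ℝ)+1))^2 := by nlinarith [Nat.cast_nonneg (α := ℝ) n]
    nlinarith [mul_le_mul_of_nonneg_left h hc.le]

lemma summable_int_gauss_shift (c : ℝ) (hc : 0 < c) (t : ℝ) :
    Summable (fun a : ℤ => Real.exp (-c * (t - a)^2)) := by
  apply Summable.of_nonneg_of_le (fun a => (Real.exp_pos _).le) _
    (((summable_int_gauss (c/2) (by linarith)).mul_left (Real.exp (c * t^2))))
  intro a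
  rw [← Real.exp_add]
  apply Real.exp_le_exp.mpr
  nlinarith [sq_nonneg (2*t - (a:ℝ)), sq_nonneg ((a:ℝ))]


lemma summable_pi_gauss : ∀ (n : ℕ) (c : ℝ), 0 < c → ∀ (y : Fin n → ℝ),
    Summable (fun m : Fin n → ℤ => Real.exp (-c * sqnorm (y - zvec m))) := by
  intro n
  induction n with
  | zero => intro c hc y; exact Summable.of_finite
  | succ n ih =>
    intro c hc y
    have key : Summable (fun z : ℤ × (Fin n → ℤ) =>
        Real.exp (-c * (y 0 - z.1)^2) *
          Real.exp (-c * sqnorm ((fun i => y i.succ) - zvec z.2))) :=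
      (summable_int_gauss_shift c hc (y 0)).mul_of_nonneg (ih c hc _)
        (fun _ => (Real.exp_pos _).le) (fun _ => (Real.exp_pos _).le)
    apply ((Fin.consEquiv (fun _ => ℤ)).summable_iff).mp
    apply key.congr
    intro z
    show _ = Real.exp (-c * sqnorm (y - zvec (Fin.consEquiv (fun _ => ℤ) z)))
    rw [← Real.exp_add]
    congr 1
    have : sqnorm (y - zvec (Fin.consEquiv (fun _ => ℤ) z))
        = (y 0 - z.1)^2 + sqnorm ((fun i => y i.succ) - zvec z.2) := by
      simp only [sqnorm, Fin.sum_univ_succ, Pi.sub_apply, zvec,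
        Fin.cons_zero, Fin.cons_succ, Fin.consEquiv_apply]
    rw [this]; ring

set_option maxHeartbeats 1600000 in
lemma key_bounds (n : ℕ) : ∃ C : ℝ, 1 ≤ C ∧ ∀ k : ℕ, 1 ≤ k → ∀ p x : Fin n → ℝ,
    (1 / 2) * (⨅ m : Fin n → ℤ, sqnorm (x - p - zvec m)) - Real.log C / k ≤
        -(1 / (k : ℝ)) *
          Real.log (∑' m : Fin n → ℤ, Real.exp (-(k : ℝ) * sqnorm (x - p - zvec m) / 2)) ∧
      -(1 / (k : ℝ)) *
          Real.log (∑' m : Fin n → ℤ, Real.exp (-(k : ℝ) * sqnorm (x - p - zvec m) / 2)) ≤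
        (1 / 2) * (⨅ m : Fin n → ℤ, sqnorm (x - p - zvec m)) := by
  classical
  have hA_sum : Summable (fun m : Fin n → ℤ => Real.exp (-(1/4 : ℝ) * sqnorm (zvec m))) := by
    have := summable_pi_gauss n (1/4) (by norm_num) 0
    apply this.congr
    intro m
    congr 2
    simp [sub_eq_add_neg, sqnorm, neg_sq]
  set A : ℝ := ∑' m : Fin n → ℤ, Real.exp (-(1/4 : ℝ) * sqnorm (zvec m)) with hA_def
  have hA1 : 1 ≤ A := by
    have h0 : Real.exp (-(1/4 : ℝ) * sqnorm (zvec (0 : Fin n → ℤ))) = 1 := by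
      simp [sqnorm, zvec]
    calc (1:ℝ) = Real.exp (-(1/4 : ℝ) * sqnorm (zvec (0 : Fin n → ℤ))) := h0.symm
      _ ≤ A := Summable.le_tsum hA_sum 0 (fun _ _ => (Real.exp_pos _).le)
  have hexp1 : (1:ℝ) ≤ Real.exp ((n:ℝ)/4) := Real.one_le_exp (by positivity)
  refine ⟨Real.exp ((n:ℝ)/4) * A, by nlinarith, ?_⟩
  intro k hk p x
  have hk0 : (0:ℝ) < k := by exact_mod_cast hk
  have hk1 : (1:ℝ) ≤ k := by exact_mod_cast hk
  set y : Fin n → ℝ := x - p with hy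
  have hbdd : BddBelow (Set.range fun m : Fin n → ℤ => sqnorm (y - zvec m)) :=
    ⟨0, by rintro _ ⟨m, rfl⟩; exact sqnorm_nonneg' _⟩
  set d2 : ℝ := ⨅ m : Fin n → ℤ, sqnorm (y - zvec m) with hd2
  have hd2_le : ∀ m : Fin n → ℤ, d2 ≤ sqnorm (y - zvec m) := fun m => ciInf_le hbdd m
  have hd2_nonneg : 0 ≤ d2 := le_ciInf fun m => sqnorm_nonneg' _
  set m₀ : Fin n → ℤ := fun i => round (y i) with hm₀
  have hqm₀ : sqnorm (y - zvec m₀) ≤ (n:ℝ)/4 := by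
    have hpt : ∀ i : Fin n, ((y - zvec m₀) i)^2 ≤ 1/4 := by
      intro i
      have h := abs_le.mp (abs_sub_round (y i))
      have : (y - zvec m₀) i = y i - round (y i) := by simp [zvec, hm₀]
      rw [this]
      nlinarith [h.1, h.2]
    calc sqnorm (y - zvec m₀) = ∑ i, ((y - zvec m₀) i)^2 := rfl
      _ ≤ ∑ _i : Fin n, (1/4 : ℝ) := Finset.sum_le_sum fun i _ => hpt i
      _ = (n:ℝ)/4 := by simp; ring
  have hd2n : d2 ≤ (n:ℝ)/4 := le_trans (hd2_le m₀) hqm₀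
  have hS_sum : Summable (fun m : Fin n → ℤ => Real.exp (-(k:ℝ) * sqnorm (y - zvec m) / 2)) := by
    have := summable_pi_gauss n ((k:ℝ)/2) (by positivity) y
    apply this.congr
    intro m
    congr 1
    ring
  set S : ℝ := ∑' m : Fin n → ℤ, Real.exp (-(k:ℝ) * sqnorm (y - zvec m) / 2) with hS_def
  have hS_pos : 0 < S :=
    Summable.tsum_pos hS_sum (fun m => (Real.exp_pos _).le) m₀ (Real.exp_pos _)
  have hterm : ∀ m : Fin n → ℤ, Real.exp (-(k:ℝ) * sqnorm (y - zvec m) / 2) ≤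
      Real.exp ((n:ℝ)/4 - (k:ℝ) * d2 / 2) * Real.exp (-(1/4 : ℝ) * sqnorm (zvec (m - m₀))) := by
    intro m
    rw [← Real.exp_add]
    apply Real.exp_le_exp.mpr
    have hB : sqnorm (zvec (m - m₀)) ≤ 2 * sqnorm (y - zvec m) + 2 * sqnorm (y - zvec m₀) := by
      have hpt : ∀ i : Fin n, ((zvec (m - m₀)) i)^2 ≤
          2 * ((y - zvec m) i)^2 + 2 * ((y - zvec m₀) i)^2 := by
        intro i
        have h1 : (zvec (m - m₀)) i = ((y - zvec m₀) i) - ((y - zvec m) i) := by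
          simp only [zvec, Pi.sub_apply]
          push_cast
          ring
        rw [h1]
        nlinarith [sq_nonneg (((y - zvec m) i) + ((y - zvec m₀) i))]
      calc sqnorm (zvec (m - m₀)) = ∑ i, ((zvec (m - m₀)) i)^2 := rfl
        _ ≤ ∑ i, (2 * ((y - zvec m) i)^2 + 2 * ((y - zvec m₀) i)^2) :=
            Finset.sum_le_sum fun i _ => hpt i
        _ = 2 * sqnorm (y - zvec m) + 2 * sqnorm (y - zvec m₀) := by
            simp [sqnorm, Finset.sum_add_distrib, Finset.mul_sum]
    have hqm : d2 ≤ sqnorm (y - zvec m) := hd2_le m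
    have hkin : (k:ℝ) * d2 - (k:ℝ) * sqnorm (y - zvec m) ≤ d2 - sqnorm (y - zvec m) := by
      nlinarith [mul_nonneg (by linarith : (0:ℝ) ≤ (k:ℝ) - 1)
        (by linarith : (0:ℝ) ≤ sqnorm (y - zvec m) - d2)]
    linarith [hqm₀, hB, hkin, hd2n, hqm]
  have hA_shift : Summable (fun m : Fin n → ℤ =>
      Real.exp (-(1/4 : ℝ) * sqnorm (zvec (m - m₀)))) :=
    (Equiv.subRight m₀).summable_iff.mpr hA_sum
  have hS_le : S ≤ Real.exp ((n:ℝ)/4 - (k:ℝ) * d2 / 2) * A := by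
    have h1 : S ≤ ∑' m : Fin n → ℤ,
        Real.exp ((n:ℝ)/4 - (k:ℝ) * d2 / 2) * Real.exp (-(1/4 : ℝ) * sqnorm (zvec (m - m₀))) :=
      Summable.tsum_le_tsum hterm hS_sum (hA_shift.mul_left _)
    have h2 : (∑' m : Fin n → ℤ,
        Real.exp ((n:ℝ)/4 - (k:ℝ) * d2 / 2) * Real.exp (-(1/4 : ℝ) * sqnorm (zvec (m - m₀))))
        = Real.exp ((n:ℝ)/4 - (k:ℝ) * d2 / 2) * A := by
      rw [tsum_mul_left]
      congr 1
      exact Equiv.tsum_eq (Equiv.subRight m₀) (fun m => Real.exp (-(1/4:ℝ) * sqnorm (zvec m)))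
    linarith [h2.le, h2.ge]
  have hA_pos : (0:ℝ) < A := by linarith
  constructor
  · have hlogS : Real.log S ≤ (n:ℝ)/4 - (k:ℝ) * d2 / 2 + Real.log A := by
      calc Real.log S ≤ Real.log (Real.exp ((n:ℝ)/4 - (k:ℝ) * d2 / 2) * A) :=
            Real.log_le_log hS_pos hS_le
        _ = (n:ℝ)/4 - (k:ℝ) * d2 / 2 + Real.log A := by
            rw [Real.log_mul (Real.exp_ne_zero _) (ne_of_gt hA_pos), Real.log_exp]
    have hlogC : Real.log (Real.exp ((n:ℝ)/4) * A) = (n:ℝ)/4 + Real.log A := by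
      rw [Real.log_mul (Real.exp_ne_zero _) (ne_of_gt hA_pos), Real.log_exp]
    rw [hlogC]
    have key : (k:ℝ) * d2 / 2 - ((n:ℝ)/4 + Real.log A) ≤ -Real.log S := by linarith
    calc (1/2) * d2 - ((n:ℝ)/4 + Real.log A) / (k:ℝ)
        = ((k:ℝ) * d2 / 2 - ((n:ℝ)/4 + Real.log A)) / (k:ℝ) := by
          field_simp
      _ ≤ (-Real.log S) / (k:ℝ) := (div_le_div_iff_of_pos_right hk0).mpr key
      _ = -(1/(k:ℝ)) * Real.log S := by ring
  · have h : ∀ m : Fin n → ℤ, -(1/(k:ℝ)) * Real.log S ≤ (1/2) * sqnorm (y - zvec m) := by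
      intro m
      have hterm_le : Real.exp (-(k:ℝ) * sqnorm (y - zvec m) / 2) ≤ S :=
        Summable.le_tsum hS_sum m (fun _ _ => (Real.exp_pos _).le)
      have hlog : -(k:ℝ) * sqnorm (y - zvec m) / 2 ≤ Real.log S := by
        calc -(k:ℝ) * sqnorm (y - zvec m) / 2
            = Real.log (Real.exp (-(k:ℝ) * sqnorm (y - zvec m) / 2)) := (Real.log_exp _).symm
          _ ≤ Real.log S := Real.log_le_log (Real.exp_pos _) hterm_le
      calc -(1/(k:ℝ)) * Real.log S = (-Real.log S) / (k:ℝ) := by ring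
        _ ≤ ((k:ℝ) * ((1/2) * sqnorm (y - zvec m))) / (k:ℝ) :=
            (div_le_div_iff_of_pos_right hk0).mpr (by linarith)
        _ = (1/2) * sqnorm (y - zvec m) := by field_simp
    have h2 : 2 * (-(1/(k:ℝ)) * Real.log S) ≤ d2 := le_ciInf fun m => by linarith [h m]
    linarith


/-- There is a constant `C ≥ 1` (depending only on `n`) such that for all
`k ≥ 1` and all `p, x ∈ ℝⁿ`,
`(1/2) inf_m |x-m-p|² - (log C)/k ≤ -(1/k) log Σ_m e^{-k|x-m-p|²/2} ≤ (1/2) inf_m |x-m-p|²`;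
in particular `-(1/k) log Σ_{m ∈ ℤⁿ+p} e^{-k|x-m|²/2} → d(πx,πp)²/2` uniformly in `x, p`. -/
theorem statement11 (n : ℕ) (hn : 1 ≤ n) :
    (∃ C : ℝ, 1 ≤ C ∧ ∀ k : ℕ, 1 ≤ k → ∀ p x : Fin n → ℝ,
      (1 / 2) * (⨅ m : Fin n → ℤ, sqnorm (x - p - zvec m)) - Real.log C / k ≤
          -(1 / (k : ℝ)) *
            Real.log (∑' m : Fin n → ℤ, Real.exp (-(k : ℝ) * sqnorm (x - p - zvec m) / 2)) ∧
        -(1 / (k : ℝ)) *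
            Real.log (∑' m : Fin n → ℤ, Real.exp (-(k : ℝ) * sqnorm (x - p - zvec m) / 2)) ≤
          (1 / 2) * (⨅ m : Fin n → ℤ, sqnorm (x - p - zvec m))) ∧
    (∀ ε > (0:ℝ), ∃ K : ℕ, ∀ k : ℕ, K ≤ k → ∀ p x : Fin n → ℝ,
      |(-(1 / (k : ℝ)) *
          Real.log (∑' m : Fin n → ℤ, Real.exp (-(k : ℝ) * sqnorm (x - p - zvec m) / 2))) -
        (⨅ m : Fin n → ℤ, Real.sqrt (sqnorm (x - p - zvec m))) ^ 2 / 2| ≤ ε) := by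
  obtain ⟨C, hC1, hbound⟩ := key_bounds n
  refine ⟨⟨C, hC1, hbound⟩, ?_⟩
  intro ε hε
  refine ⟨max 1 (Nat.ceil (Real.log C / ε)), ?_⟩
  intro k hk p x
  have hk1 : 1 ≤ k := le_trans (le_max_left _ _) hk
  have hk0 : (0:ℝ) < k := by exact_mod_cast hk1
  obtain ⟨h1, h2⟩ := hbound k hk1 p x
  -- identify the squared infimum of square roots with the infimum of squared norms
  have hbddD : BddBelow (Set.range fun m : Fin n → ℤ => sqnorm (x - p - zvec m)) :=
    ⟨0, by rintro _ ⟨m, rfl⟩; exact sqnorm_nonneg' _⟩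
  have hbddI : BddBelow (Set.range fun m : Fin n → ℤ => Real.sqrt (sqnorm (x - p - zvec m))) :=
    ⟨0, by rintro _ ⟨m, rfl⟩; exact Real.sqrt_nonneg _⟩
  set D : ℝ := ⨅ m : Fin n → ℤ, sqnorm (x - p - zvec m) with hD
  set I : ℝ := ⨅ m : Fin n → ℤ, Real.sqrt (sqnorm (x - p - zvec m)) with hI
  have hI0 : 0 ≤ I := le_ciInf fun m => Real.sqrt_nonneg _
  have hD0 : 0 ≤ D := le_ciInf fun m => sqnorm_nonneg' _
  have hIsq : I^2 = D := by
    apply le_antisymm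
    · refine le_ciInf fun m => ?_
      calc I^2 ≤ (Real.sqrt (sqnorm (x - p - zvec m)))^2 :=
            pow_le_pow_left₀ hI0 (ciInf_le hbddI m) 2
        _ = sqnorm (x - p - zvec m) := Real.sq_sqrt (sqnorm_nonneg' _)
    · have hsqrtD : Real.sqrt D ≤ I :=
        le_ciInf fun m => Real.sqrt_le_sqrt (ciInf_le hbddD m)
      calc D = (Real.sqrt D)^2 := (Real.sq_sqrt hD0).symm
        _ ≤ I^2 := pow_le_pow_left₀ (Real.sqrt_nonneg _) hsqrtD 2
  have hlogC : 0 ≤ Real.log C := Real.log_nonneg hC1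
  have hdiv : Real.log C / (k:ℝ) ≤ ε := by
    have hceil : (Real.log C / ε) ≤ (k:ℝ) := by
      calc Real.log C / ε ≤ (Nat.ceil (Real.log C / ε) : ℝ) := Nat.le_ceil _
        _ ≤ (k:ℝ) := by exact_mod_cast le_trans (le_max_right _ _) hk
    rw [div_le_iff₀ hk0]
    calc Real.log C = (Real.log C / ε) * ε := by field_simp
      _ ≤ (k:ℝ) * ε := mul_le_mul_of_nonneg_right hceil hε.le
      _ = ε * (k:ℝ) := by ring
  rw [hIsq, abs_le]
  constructor
  · linarith
  · linarith

end
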